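/- Let q be a positive integer, let X = {x_1,…,x_q}, Y = {y_1,…,y_q}, Z = {z_1,…,z_q} be pairwise disjoint sets, and let S ⊆ X×Y×Z with |S| = p, S = {s_1,…,s_p}. Construct the multigraph G with vertex set X ∪ Y ∪ Z ∪ {s_1,…,s_p} ∪ {a,b}, where for each triple s_r = (x,y,z) ∈ S the vertex s_r is joined by one edge to each of x, y, and z, and additionally there is a loop aa at vertex a and a loop bb at vertex b. Let I(G) be the incidence matrix of G over GF(2), where the entry in row v and column e is the number of endpoints of e equal to v reduced modulo 2 (so the columns of the loops aa and bb are zero). Let P be the matrix over GF(2) with rows indexed by V(G) and columns indexed by E(G) that is zero except for the following entries: for each i ∈ {1,…,q}, the entries (x_i, aa) = 1, (y_i, aa) = 1, (x_i, bb) = 1, (z_i, bb) = 1. Let A = I(G) + P and T = {aa, bb}. Then S contains a matching — a subset S' ⊆ S with |S'| = q such that no two elements of S' agree in any coordinate — if and only if there exists a set F ⊆ E(G)∖T with |F| ≤ 3q such that both columns A^{aa} and A^{bb} lie in the GF(2)-span of the columns {A^f : f ∈ F}. -/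

import Mathlib

open Matrix

/-- The vertex set of the multigraph `G` in the 3-Dimensional Matching reduction:
the elements of `X = {x_1, …, x_q}`, `Y = {y_1, …, y_q}`, `Z = {z_1, …, z_q}` (each a copy
of `Fin q`), one vertex for each triple in `S`, and the two vertices `a` (encoded `false`)
and `b` (encoded `true`). -/
abbrev TDMVert (q : ℕ) (S : Finset (Fin q × Fin q × Fin q)) : Type :=
  (Fin q ⊕ Fin q ⊕ Fin q) ⊕ ↥S ⊕ Bool

/-- The edge set of `G`: for each triple `s = (x, y, z) ∈ S` three edges joining the
vertex `s` to `x`, to `y` and to `z` (indexed by `Fin 3`), together with the loop `aa`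
(encoded `Sum.inr false`) and the loop `bb` (encoded `Sum.inr true`). -/
abbrev TDMEdge (q : ℕ) (S : Finset (Fin q × Fin q × Fin q)) : Type :=
  (↥S × Fin 3) ⊕ Bool

attribute [local instance] Classical.propDecidable

/-- The incidence matrix of `G` over GF(2): the entry in row `v` and column `e` is the
number of endpoints of `e` equal to `v`, reduced mod 2; in particular the columns of the
loops `aa` and `bb` are zero. -/
noncomputable def incTDM (q : ℕ) (S : Finset (Fin q × Fin q × Fin q)) :
    Matrix (TDMVert q S) (TDMEdge q S) (ZMod 2) :=
  fun w e =>
    match e with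
    | Sum.inl (s, i) =>
        if w = Sum.inr (Sum.inl s) ∨
           (i = 0 ∧ w = Sum.inl (Sum.inl s.1.1)) ∨
           (i = 1 ∧ w = Sum.inl (Sum.inr (Sum.inl s.1.2.1))) ∨
           (i = 2 ∧ w = Sum.inl (Sum.inr (Sum.inr s.1.2.2)))
        then 1 else 0
    | Sum.inr _ => 0

/-- The perturbation matrix `P`: zero except that for each `i ∈ {1, …, q}` the entries
`(x_i, aa) = (y_i, aa) = (x_i, bb) = (z_i, bb) = 1`. -/
noncomputable def pertTDM (q : ℕ) (S : Finset (Fin q × Fin q × Fin q)) :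
    Matrix (TDMVert q S) (TDMEdge q S) (ZMod 2) :=
  fun w e =>
    match e, w with
    | Sum.inr false, Sum.inl (Sum.inl _) => 1
    | Sum.inr false, Sum.inl (Sum.inr (Sum.inl _)) => 1
    | Sum.inr true, Sum.inl (Sum.inl _) => 1
    | Sum.inr true, Sum.inl (Sum.inr (Sum.inr _)) => 1
    | _, _ => 0

section TDMcols
attribute [local instance] Classical.propDecidable
open Matrix Finset
variable {q : ℕ} {S : Finset (Fin q × Fin q × Fin q)}

lemma tdm_pert_inl (w : TDMVert q S) (e : ↥S × Fin 3) : pertTDM q S w (Sum.inl e) = 0 := by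
  rcases w with (x|y|z)|(t|b) <;> rfl

lemma tdm_colA_inl (p : ↥S × Fin 3) (w : TDMVert q S) :
    (incTDM q S + pertTDM q S)ᵀ (Sum.inl p) w = incTDM q S w (Sum.inl p) := by
  rw [Matrix.transpose_apply, Matrix.add_apply, tdm_pert_inl, add_zero]

lemma tdm_colA_inr (b : Bool) (w : TDMVert q S) :
    (incTDM q S + pertTDM q S)ᵀ (Sum.inr b) w = pertTDM q S w (Sum.inr b) := by
  rw [Matrix.transpose_apply, Matrix.add_apply]
  have : incTDM q S w (Sum.inr b) = 0 := rfl
  rw [this, zero_add]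

-- entry computations
lemma tdm_inc_x (x : Fin q) (s : ↥S) (i : Fin 3) :
    incTDM q S (Sum.inl (Sum.inl x)) (Sum.inl (s, i)) =
      if i = 0 ∧ x = s.1.1 then 1 else 0 := by
  simp only [incTDM]
  by_cases h0 : i = 0 <;> by_cases hx : x = s.1.1 <;> simp [h0, hx]

lemma tdm_inc_y (y : Fin q) (s : ↥S) (i : Fin 3) :
    incTDM q S (Sum.inl (Sum.inr (Sum.inl y))) (Sum.inl (s, i)) =
      if i = 1 ∧ y = s.1.2.1 then 1 else 0 := by
  simp only [incTDM]
  by_cases h0 : i = 1 <;> by_cases hx : y = s.1.2.1 <;> simp [h0, hx]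

lemma tdm_inc_z (z : Fin q) (s : ↥S) (i : Fin 3) :
    incTDM q S (Sum.inl (Sum.inr (Sum.inr z))) (Sum.inl (s, i)) =
      if i = 2 ∧ z = s.1.2.2 then 1 else 0 := by
  simp only [incTDM]
  by_cases h0 : i = 2 <;> by_cases hx : z = s.1.2.2 <;> simp [h0, hx]

lemma tdm_inc_t (t : ↥S) (s : ↥S) (i : Fin 3) :
    incTDM q S (Sum.inr (Sum.inl t)) (Sum.inl (s, i)) = if t = s then 1 else 0 := by
  simp only [incTDM]
  by_cases h : t = s <;> simp [h]

lemma tdm_inc_ab (b : Bool) (s : ↥S) (i : Fin 3) :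
    incTDM q S (Sum.inr (Sum.inr b)) (Sum.inl (s, i)) = 0 := by
  simp only [incTDM]
  simp

lemma tdm_pert_val (w : TDMVert q S) (b : Bool) :
    pertTDM q S w (Sum.inr b) =
      match w with
      | Sum.inl (Sum.inl _) => 1
      | Sum.inl (Sum.inr (Sum.inl _)) => if b then 0 else 1
      | Sum.inl (Sum.inr (Sum.inr _)) => if b then 1 else 0
      | _ => 0 := by
  rcases w with (x|y|z)|(t|c) <;> rcases b <;> rfl

end TDMcols

section TDMaux
attribute [local instance] Classical.propDecidable
open Matrix Finset

-- parity helpers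
lemma tdm_odd_of {n : ℕ} (h : (n : ZMod 2) = 1) : n % 2 = 1 := by
  by_contra hc
  have h2 : n % 2 = 0 := by omega
  have : ((n : ℕ) : ZMod 2) = ((n % 2 : ℕ) : ZMod 2) := (ZMod.natCast_mod n 2).symm
  rw [h2] at this; rw [this] at h; exact absurd h (by decide)

lemma tdm_even_of {n : ℕ} (h : (n : ZMod 2) = 0) : n % 2 = 0 := by
  by_contra hc
  have h2 : n % 2 = 1 := by omega
  have : ((n : ℕ) : ZMod 2) = ((n % 2 : ℕ) : ZMod 2) := (ZMod.natCast_mod n 2).symm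
  rw [h2] at this; rw [this] at h; exact absurd h (by decide)

variable {q : ℕ} {S : Finset (Fin q × Fin q × Fin q)}

-- fiberwise counting
lemma tdm_card_fiber (T : Finset (↥S)) (g : ↥S → Fin q) :
    T.card = ∑ x : Fin q, (T.filter fun s => g s = x).card :=
  Finset.card_eq_sum_card_fiberwise (fun s _ => Finset.mem_univ (g s))

lemma tdm_le_card (T : Finset (↥S)) (g : ↥S → Fin q)
    (h : ∀ x, 0 < (T.filter fun s => g s = x).card) : q ≤ T.card := by
  rw [tdm_card_fiber T g]
  calc q = ∑ _x : Fin q, 1 := by simp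
    _ ≤ _ := Finset.sum_le_sum (fun x _ => h x)

lemma tdm_fiber_eq_one (T : Finset (↥S)) (g : ↥S → Fin q) (hc : T.card = q)
    (h : ∀ x, 0 < (T.filter fun s => g s = x).card) (x : Fin q) :
    (T.filter fun s => g s = x).card = 1 := by
  by_contra hne
  have h2 : 2 ≤ (T.filter fun s => g s = x).card := by have := h x; omega
  have hlt : ∑ _x : Fin q, 1 < ∑ y : Fin q, (T.filter fun s => g s = y).card :=
    Finset.sum_lt_sum (fun y _ => h y) ⟨x, Finset.mem_univ x, by omega⟩
  rw [← tdm_card_fiber T g, hc] at hlt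
  simp at hlt

lemma tdm_fiber_one_of_inj (T : Finset (↥S)) (g : ↥S → Fin q) (hc : T.card = q)
    (hinj : ∀ s ∈ T, ∀ t ∈ T, g s = g t → s = t) (x : Fin q) :
    (T.filter fun s => g s = x).card = 1 := by
  have himg : T.image g = Finset.univ := by
    apply Finset.eq_univ_of_card
    rw [Finset.card_image_of_injOn (fun s hs t ht => hinj s hs t ht), hc, Fintype.card_fin]
  have hx : x ∈ T.image g := by rw [himg]; exact Finset.mem_univ x
  obtain ⟨s0, hs0, hgs0⟩ := Finset.mem_image.mp hx
  rw [Finset.card_eq_one]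
  exact ⟨s0, Finset.eq_singleton_iff_unique_mem.mpr
    ⟨Finset.mem_filter.mpr ⟨hs0, hgs0⟩,
     fun t ht => by
      obtain ⟨htT, hgt⟩ := Finset.mem_filter.mp ht
      exact hinj t htT s0 hs0 (by rw [hgt, hgs0])⟩⟩

lemma tdm_inj_of_fiber_one (T : Finset (↥S)) (g : ↥S → Fin q)
    (h : ∀ x, (T.filter fun s => g s = x).card ≤ 1) :
    ∀ s ∈ T, ∀ t ∈ T, g s = g t → s = t := by
  intro s hs t ht hg
  by_contra hne
  have hsub : {s, t} ⊆ T.filter fun u => g u = g t := by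
    intro u hu
    rcases Finset.mem_insert.mp hu with rfl | hu
    · exact Finset.mem_filter.mpr ⟨hs, hg⟩
    · rw [Finset.mem_singleton.mp hu]; exact Finset.mem_filter.mpr ⟨ht, rfl⟩
  have h2 : ({s, t} : Finset ↥S).card = 2 := Finset.card_pair hne
  have := Finset.card_le_card hsub
  have := h (g t)
  omega

end TDMaux

section TDMaux2
attribute [local instance] Classical.propDecidable
open Matrix Finset

variable {q : ℕ} {S : Finset (Fin q × Fin q × Fin q)}

lemma tdm_le_card' (T : Finset (↥S)) (g : ↥S → Fin q)
    {D : ∀ x : Fin q, DecidablePred fun s : ↥S => g s = x}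
    (h : ∀ x, 0 < (@Finset.filter _ _ (D x) T).card) : q ≤ T.card := by
  apply tdm_le_card T g
  intro x
  have h1 := h x
  have e : (@Finset.filter _ _ (D x) T).card = (@Finset.filter _ (fun s => g s = x) (fun a => instDecidableEqFin q (g a) x) T).card := by
    congr!
  omega

lemma tdm_fiber_eq_one' (T : Finset (↥S)) (g : ↥S → Fin q)
    {D : ∀ x : Fin q, DecidablePred fun s : ↥S => g s = x}
    (hc : T.card = q) (h : ∀ x, 0 < (@Finset.filter _ _ (D x) T).card) (x : Fin q) :
    (@Finset.filter _ _ (D x) T).card = 1 := by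
  have e : ∀ y, (@Finset.filter _ _ (D y) T).card =
      (@Finset.filter _ (fun s => g s = y) (fun a => instDecidableEqFin q (g a) y) T).card := by
    intro y; congr!
  rw [e x]
  exact tdm_fiber_eq_one T g hc (fun y => by have := h y; have := e y; omega) x

lemma tdm_inj_of_fiber_one' (T : Finset (↥S)) (g : ↥S → Fin q)
    {D : ∀ x : Fin q, DecidablePred fun s : ↥S => g s = x}
    (h : ∀ x, (@Finset.filter _ _ (D x) T).card ≤ 1) :
    ∀ s ∈ T, ∀ t ∈ T, g s = g t → s = t := by
  apply tdm_inj_of_fiber_one T g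
  intro x
  have h1 := h x
  have e : (@Finset.filter _ _ (D x) T).card = (@Finset.filter _ (fun s => g s = x) (fun a => instDecidableEqFin q (g a) x) T).card := by
    congr!
  omega

end TDMaux2

section TDMfwd
attribute [local instance] Classical.propDecidable
open Matrix Finset

variable {q : ℕ} {S : Finset (Fin q × Fin q × Fin q)}

lemma tdm_filter_comm (T : Finset (↥S)) (g : ↥S → Fin q) (x : Fin q) :
    (T.filter fun s => x = g s) = T.filter fun s => g s = x := by
  ext s; simp [Finset.mem_filter, eq_comm]

lemma tdm_hsum (T' : Finset (↥S)) (hT'card : T'.card = q)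
    (hfib0 : ∀ x, (T'.filter fun s => s.1.1 = x).card = 1)
    (hfib1 : ∀ y, (T'.filter fun s => s.1.2.1 = y).card = 1)
    (hfib2 : ∀ z, (T'.filter fun s => s.1.2.2 = z).card = 1)
    (b : Bool) :
    (incTDM q S + pertTDM q S)ᵀ (Sum.inr b) =
      ∑ s ∈ T', ((incTDM q S + pertTDM q S)ᵀ (Sum.inl (s, 0)) +
                  (incTDM q S + pertTDM q S)ᵀ (Sum.inl (s, if b then 2 else 1))) := by
  funext w
  rw [Finset.sum_apply]
  simp only [Pi.add_apply, tdm_colA_inl, tdm_colA_inr]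
  rcases w with (x|y|z)|(t|c)
  · simp only [tdm_inc_x, tdm_pert_val]
    rcases b <;>
      · simp only [if_true, if_false, Bool.false_eq_true, true_and,
          show ((1:Fin 3) = 0) = False by simp, show ((2:Fin 3) = 0) = False by simp,
          false_and, if_false, add_zero, eq_self_iff_true]
        rw [Finset.sum_boole, tdm_filter_comm, hfib0, Nat.cast_one]
  · simp only [tdm_inc_y, tdm_pert_val]
    rcases b
    · simp only [if_false, Bool.false_eq_true, show ((0:Fin 3) = 1) = False by simp,
        show ((1:Fin 3) = 1) = True by simp, false_and, true_and, if_false, zero_add]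
      rw [Finset.sum_boole, tdm_filter_comm, hfib1, Nat.cast_one]
    · simp only [if_true, show ((0:Fin 3) = 1) = False by simp,
        show ((2:Fin 3) = 1) = False by simp, false_and, if_false, add_zero]
      simp
  · simp only [tdm_inc_z, tdm_pert_val]
    rcases b
    · simp only [if_false, Bool.false_eq_true, show ((0:Fin 3) = 2) = False by simp,
        show ((1:Fin 3) = 2) = False by simp, false_and, if_false, add_zero]
      simp
    · simp only [if_true, show ((0:Fin 3) = 2) = False by simp,
        show ((2:Fin 3) = 2) = True by simp, false_and, true_and, if_false, zero_add]
      rw [Finset.sum_boole, tdm_filter_comm, hfib2, Nat.cast_one]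
  · simp only [tdm_inc_t, tdm_pert_val]
    rw [eq_comm]
    apply Finset.sum_eq_zero
    intro s _
    by_cases h : t = s <;> simp [h] <;> decide
  · simp only [tdm_inc_ab, tdm_pert_val, add_zero]
    simp

end TDMfwd

section TDMbwd
attribute [local instance] Classical.propDecidable
open Matrix Finset

variable {q : ℕ} {S : Finset (Fin q × Fin q × Fin q)}

/-- vertices `s` such that the edge `(s,i)` belongs to `E`. -/
noncomputable def tdmW (E : Finset (↥S × Fin 3)) (i : Fin 3) : Finset (↥S) :=
  Finset.univ.filter (fun s => (s, i) ∈ E)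

lemma tdm_mem_W (E : Finset (↥S × Fin 3)) (i : Fin 3) (s : ↥S) :
    s ∈ tdmW E i ↔ (s, i) ∈ E := by simp [tdmW]

lemma tdm_W_mono {E E' : Finset (↥S × Fin 3)} (h : E ⊆ E') (i : Fin 3) :
    tdmW E i ⊆ tdmW E' i := fun s hs => (tdm_mem_W _ _ _).mpr (h ((tdm_mem_W _ _ _).mp hs))

lemma tdm_card_filter_eq (E : Finset (↥S × Fin 3)) (i : Fin 3) (P : ↥S → Prop) :
    (E.filter fun p => p.2 = i ∧ P p.1).card = ((tdmW E i).filter fun s => P s).card := by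
  refine Finset.card_bij' (fun p _ => p.1) (fun s _ => (s, i)) ?_ ?_ ?_ ?_
  · rintro ⟨s0, i0⟩ hp
    obtain ⟨hpE, hpi, hpP⟩ := by simpa [Finset.mem_filter] using hp
    subst hpi
    exact Finset.mem_filter.mpr ⟨(tdm_mem_W _ _ _).mpr hpE, hpP⟩
  · intro s hs
    obtain ⟨hsW, hsP⟩ := Finset.mem_filter.mp hs
    exact Finset.mem_filter.mpr ⟨(tdm_mem_W _ _ _).mp hsW, rfl, hsP⟩
  · rintro ⟨s0, i0⟩ hp
    obtain ⟨hpE, hpi, hpP⟩ := by simpa [Finset.mem_filter] using hp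
    subst hpi
    rfl
  · intro s hs; rfl

lemma tdm_card_t (E : Finset (↥S × Fin 3)) (t : ↥S) :
    (E.filter fun p => t = p.1).card =
      (if (t, 0) ∈ E then 1 else 0) + (if (t, 1) ∈ E then 1 else 0) +
        (if (t, 2) ∈ E then 1 else 0) := by
  have h : (E.filter fun p => t = p.1).card =
      ((Finset.univ : Finset (Fin 3)).filter fun i => (t, i) ∈ E).card := by
    refine Finset.card_bij' (fun p _ => p.2) (fun i _ => (t, i)) ?_ ?_ ?_ ?_
    · rintro ⟨s0, i0⟩ hp
      obtain ⟨hpE, hpt⟩ := Finset.mem_filter.mp hp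
      have hpt' : t = s0 := hpt
      subst hpt'
      exact Finset.mem_filter.mpr ⟨Finset.mem_univ _, hpE⟩
    · intro i hi
      exact Finset.mem_filter.mpr ⟨(Finset.mem_filter.mp hi).2, rfl⟩
    · rintro ⟨s0, i0⟩ hp
      obtain ⟨hpE, hpt⟩ := Finset.mem_filter.mp hp
      have hpt' : t = s0 := hpt
      subst hpt'
      rfl
    · intro i hi; rfl
  rw [h, Finset.card_filter, Fin.sum_univ_three]

lemma tdm_cardE (E : Finset (↥S × Fin 3)) :
    E.card = (tdmW E 0).card + (tdmW E 1).card + (tdmW E 2).card := by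
  have h : E.card = ∑ i : Fin 3, (E.filter fun p => p.2 = i).card :=
    Finset.card_eq_sum_card_fiberwise (fun p _ => Finset.mem_univ p.2)
  have h2 : ∀ i : Fin 3, (E.filter fun p => p.2 = i).card = (tdmW E i).card := by
    intro i
    have := tdm_card_filter_eq E i (fun _ => True)
    simpa using this
  rw [h, Fin.sum_univ_three, h2 0, h2 1, h2 2]

lemma tdm_extract (F : Set (TDMEdge q S))
    (hdisj : Disjoint F (Set.range (Sum.inr : Bool → TDMEdge q S)))
    (b : Bool)
    (h : (incTDM q S + pertTDM q S)ᵀ (Sum.inr b) ∈ Submodule.span (ZMod 2)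
      ((fun e : TDMEdge q S => (incTDM q S + pertTDM q S)ᵀ e) '' F)) :
    ∃ E : Finset (↥S × Fin 3), (∀ p ∈ E, (Sum.inl p : TDMEdge q S) ∈ F) ∧
      ∀ w : TDMVert q S, ∑ p ∈ E, incTDM q S w (Sum.inl p) =
        pertTDM q S w (Sum.inr b) := by
  obtain ⟨l, hl, hlc⟩ := (Finsupp.mem_span_image_iff_linearCombination _).mp h
  have hlsupp : ↑l.support ⊆ F := (Finsupp.mem_supported _ _).mp hl
  have hinl : ∀ e ∈ l.support, ∃ p : ↥S × Fin 3, e = Sum.inl p := by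
    intro e he
    rcases e with p | c
    · exact ⟨p, rfl⟩
    · exact absurd (hlsupp he) (fun hc => Set.disjoint_left.mp hdisj hc ⟨c, rfl⟩)
  set E : Finset (↥S × Fin 3) :=
    l.support.preimage Sum.inl Sum.inl_injective.injOn with hE
  have hsupp_eq : l.support = E.image (Sum.inl : ↥S × Fin 3 → TDMEdge q S) := by
    ext e
    constructor
    · intro he
      obtain ⟨p, rfl⟩ := hinl e he
      exact Finset.mem_image_of_mem _ (Finset.mem_preimage.mpr he)
    · intro he
      obtain ⟨p, hp, rfl⟩ := Finset.mem_image.mp he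
      exact Finset.mem_preimage.mp hp
  have hone : ∀ e ∈ l.support, l e = 1 := by
    intro e he
    have : l e ≠ 0 := Finsupp.mem_support_iff.mp he
    revert this
    generalize l e = a
    revert a; decide
  refine ⟨E, ?_, ?_⟩
  · intro p hp
    exact hlsupp (by rw [hsupp_eq]; exact Finset.mem_image_of_mem _ hp)
  · intro w
    have hl2 : ∑ e ∈ l.support, l e • (incTDM q S + pertTDM q S)ᵀ e =
        (incTDM q S + pertTDM q S)ᵀ (Sum.inr b) := by
      rw [← hlc, Finsupp.linearCombination_apply, Finsupp.sum]
    rw [Finset.sum_congr (g := fun e : TDMEdge q S => ((incTDM q S + pertTDM q S)ᵀ e : TDMVert q S → ZMod 2)) rfl (fun e he => by rw [hone e he, one_smul])] at hl2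
    rw [hsupp_eq, Finset.sum_image (f := fun e : TDMEdge q S => ((incTDM q S + pertTDM q S)ᵀ e : TDMVert q S → ZMod 2)) (fun p _ p' _ h => Sum.inl_injective h)] at hl2
    have := congrFun hl2 w
    rw [Finset.sum_apply] at this
    simpa only [tdm_colA_inl, tdm_colA_inr] using this

end TDMbwd

section TDMrows
attribute [local instance] Classical.propDecidable
open Matrix Finset

variable {q : ℕ} {S : Finset (Fin q × Fin q × Fin q)}

lemma tdm_inc_x' (x : Fin q) (p : ↥S × Fin 3) :
    incTDM q S (Sum.inl (Sum.inl x)) (Sum.inl p) =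
      if p.2 = 0 ∧ x = p.1.1.1 then 1 else 0 := by
  obtain ⟨s, i⟩ := p; exact tdm_inc_x x s i

lemma tdm_inc_y' (y : Fin q) (p : ↥S × Fin 3) :
    incTDM q S (Sum.inl (Sum.inr (Sum.inl y))) (Sum.inl p) =
      if p.2 = 1 ∧ y = p.1.1.2.1 then 1 else 0 := by
  obtain ⟨s, i⟩ := p; exact tdm_inc_y y s i

lemma tdm_inc_z' (z : Fin q) (p : ↥S × Fin 3) :
    incTDM q S (Sum.inl (Sum.inr (Sum.inr z))) (Sum.inl p) =
      if p.2 = 2 ∧ z = p.1.1.2.2 then 1 else 0 := by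
  obtain ⟨s, i⟩ := p; exact tdm_inc_z z s i

lemma tdm_inc_t' (t : ↥S) (p : ↥S × Fin 3) :
    incTDM q S (Sum.inr (Sum.inl t)) (Sum.inl p) = if t = p.1 then 1 else 0 := by
  obtain ⟨s, i⟩ := p; exact tdm_inc_t t s i

lemma tdm_card_filter_x (E : Finset (↥S × Fin 3)) (x : Fin q) :
    (E.filter fun p => p.2 = 0 ∧ x = p.1.1.1).card
      = ((tdmW E 0).filter fun s => s.1.1 = x).card := by
  rw [← tdm_filter_comm (tdmW E 0) (fun s => s.1.1) x]
  have h := tdm_card_filter_eq E 0 (fun s => x = s.1.1)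
  convert h using 2 <;> congr!

lemma tdm_card_filter_y (E : Finset (↥S × Fin 3)) (y : Fin q) :
    (E.filter fun p => p.2 = 1 ∧ y = p.1.1.2.1).card
      = ((tdmW E 1).filter fun s => s.1.2.1 = y).card := by
  rw [← tdm_filter_comm (tdmW E 1) (fun s => s.1.2.1) y]
  have h := tdm_card_filter_eq E 1 (fun s => y = s.1.2.1)
  convert h using 2 <;> congr!

lemma tdm_card_filter_z (E : Finset (↥S × Fin 3)) (z : Fin q) :
    (E.filter fun p => p.2 = 2 ∧ z = p.1.1.2.2).card
      = ((tdmW E 2).filter fun s => s.1.2.2 = z).card := by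
  rw [← tdm_filter_comm (tdmW E 2) (fun s => s.1.2.2) z]
  have h := tdm_card_filter_eq E 2 (fun s => z = s.1.2.2)
  convert h using 2 <;> congr!

lemma tdm_rows (E : Finset (↥S × Fin 3)) (b : Bool)
    (h : ∀ w : TDMVert q S, ∑ p ∈ E, incTDM q S w (Sum.inl p) =
      pertTDM q S w (Sum.inr b)) :
    (∀ x, ((tdmW E 0).filter fun s => s.1.1 = x).card % 2 = 1) ∧
    (∀ y, ((tdmW E 1).filter fun s => s.1.2.1 = y).card % 2 = if b then 0 else 1) ∧
    (∀ z, ((tdmW E 2).filter fun s => s.1.2.2 = z).card % 2 = if b then 1 else 0) ∧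
    (∀ t : ↥S, ((if (t, 0) ∈ E then 1 else 0) + (if (t, 1) ∈ E then 1 else 0) +
      (if (t, 2) ∈ E then 1 else 0) : ℕ) % 2 = 0) := by
  refine ⟨fun x => ?_, fun y => ?_, fun z => ?_, fun t => ?_⟩
  · have hw := h (Sum.inl (Sum.inl x))
    simp only [tdm_inc_x', tdm_pert_val] at hw
    rw [Finset.sum_boole] at hw
    rw [tdm_card_filter_x E x] at hw
    exact tdm_odd_of hw
  · have hw := h (Sum.inl (Sum.inr (Sum.inl y)))
    simp only [tdm_inc_y', tdm_pert_val] at hw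
    rw [Finset.sum_boole] at hw
    rw [tdm_card_filter_y E y] at hw
    rcases b
    · exact tdm_odd_of hw
    · exact tdm_even_of hw
  · have hw := h (Sum.inl (Sum.inr (Sum.inr z)))
    simp only [tdm_inc_z', tdm_pert_val] at hw
    rw [Finset.sum_boole] at hw
    rw [tdm_card_filter_z E z] at hw
    rcases b
    · exact tdm_even_of hw
    · exact tdm_odd_of hw
  · have hw := h (Sum.inr (Sum.inl t))
    simp only [tdm_inc_t', tdm_pert_val] at hw
    rw [Finset.sum_boole] at hw
    rw [tdm_card_t E t] at hw
    exact tdm_even_of hw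

end TDMrows

/-- Correctness of the NP-hardness reduction from 3-Dimensional
Matching: with `A = I(G) + P` and terminals `T = {aa, bb}`, the set `S` contains a
matching (a subset `S' ⊆ S` with `|S'| = q` no two of whose elements agree in any
coordinate) if and only if there is a set `F ⊆ E(G) ∖ T` with `|F| ≤ 3q` such that both
columns `A^{aa}` and `A^{bb}` lie in the GF(2)-span of the columns `{A^f : f ∈ F}`. -/
theorem threeDimensionalMatching_iff_spaceCoverPGM
    (q : ℕ) (hq : 0 < q) (S : Finset (Fin q × Fin q × Fin q))
    (A : Matrix (TDMVert q S) (TDMEdge q S) (ZMod 2))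
    (hA : A = incTDM q S + pertTDM q S) :
    (∃ S' ⊆ S, S'.card = q ∧ ∀ a ∈ S', ∀ b ∈ S', a ≠ b →
        a.1 ≠ b.1 ∧ a.2.1 ≠ b.2.1 ∧ a.2.2 ≠ b.2.2) ↔
      (∃ F : Set (TDMEdge q S),
        Disjoint F (Set.range (Sum.inr : Bool → TDMEdge q S)) ∧
        F.ncard ≤ 3 * q ∧
        Aᵀ (Sum.inr false) ∈
          Submodule.span (ZMod 2) ((fun e : TDMEdge q S => Aᵀ e) '' F) ∧
        Aᵀ (Sum.inr true) ∈
          Submodule.span (ZMod 2) ((fun e : TDMEdge q S => Aᵀ e) '' F)) := by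
  subst hA
  constructor
  · rintro ⟨S', hsub, hcard, hmatch⟩
    classical
    set T' : Finset (↥S) := S'.subtype (fun t => t ∈ S) with hT'
    have hmemT' : ∀ s : ↥S, s ∈ T' ↔ s.1 ∈ S' := fun s => by
      simp [hT', Finset.mem_subtype]
    have hT'card : T'.card = q := by
      rw [hT', Finset.card_subtype, Finset.filter_true_of_mem (fun x hx => hsub hx), hcard]
    have hinj0 : ∀ s ∈ T', ∀ t ∈ T', s.1.1 = t.1.1 → s = t := by
      intro s hs t ht h
      by_contra hne
      exact (hmatch s.1 ((hmemT' s).1 hs) t.1 ((hmemT' t).1 ht)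
        (fun hc => hne (Subtype.ext hc))).1 h
    have hinj1 : ∀ s ∈ T', ∀ t ∈ T', s.1.2.1 = t.1.2.1 → s = t := by
      intro s hs t ht h
      by_contra hne
      exact (hmatch s.1 ((hmemT' s).1 hs) t.1 ((hmemT' t).1 ht)
        (fun hc => hne (Subtype.ext hc))).2.1 h
    have hinj2 : ∀ s ∈ T', ∀ t ∈ T', s.1.2.2 = t.1.2.2 → s = t := by
      intro s hs t ht h
      by_contra hne
      exact (hmatch s.1 ((hmemT' s).1 hs) t.1 ((hmemT' t).1 ht)
        (fun hc => hne (Subtype.ext hc))).2.2 h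
    have hfib0 := tdm_fiber_one_of_inj T' (fun s => s.1.1) hT'card hinj0
    have hfib1 := tdm_fiber_one_of_inj T' (fun s => s.1.2.1) hT'card hinj1
    have hfib2 := tdm_fiber_one_of_inj T' (fun s => s.1.2.2) hT'card hinj2
    have hmemF : ∀ s ∈ T', ∀ i : Fin 3,
        (Sum.inl (s, i) : TDMEdge q S) ∈
          (↑((T' ×ˢ (Finset.univ : Finset (Fin 3))).image (Sum.inl : ↥S × Fin 3 → TDMEdge q S)) : Set (TDMEdge q S)) :=
      fun s hs i => by
        exact Finset.mem_coe.mpr (Finset.mem_image_of_mem (Sum.inl : ↥S × Fin 3 → TDMEdge q S)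
        (Finset.mem_product.mpr ⟨hs, Finset.mem_univ i⟩))
    refine ⟨↑((T' ×ˢ (Finset.univ : Finset (Fin 3))).image (Sum.inl : ↥S × Fin 3 → TDMEdge q S)), ?_, ?_, ?_, ?_⟩
    · rw [Set.disjoint_left]
      rintro e he ⟨b, rfl⟩
      simp at he
    · rw [Set.ncard_coe_finset]
      calc ((T' ×ˢ (Finset.univ : Finset (Fin 3))).image (Sum.inl : ↥S × Fin 3 → TDMEdge q S)).card
          ≤ (T' ×ˢ (Finset.univ : Finset (Fin 3))).card := Finset.card_image_le
        _ = q * 3 := by rw [Finset.card_product, hT'card, Finset.card_univ, Fintype.card_fin]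
        _ ≤ 3 * q := by omega
    · rw [tdm_hsum T' hT'card hfib0 hfib1 hfib2 false]
      exact Submodule.sum_mem _ (fun s hs => add_mem
        (Submodule.subset_span (Set.mem_image_of_mem _ (hmemF s hs 0)))
        (Submodule.subset_span (Set.mem_image_of_mem _ (hmemF s hs _))))
    · rw [tdm_hsum T' hT'card hfib0 hfib1 hfib2 true]
      exact Submodule.sum_mem _ (fun s hs => add_mem
        (Submodule.subset_span (Set.mem_image_of_mem _ (hmemF s hs 0)))
        (Submodule.subset_span (Set.mem_image_of_mem _ (hmemF s hs _))))
  · rintro ⟨F, hdisj, hncard, haa, hbb⟩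
    obtain ⟨E1, hE1F, h1⟩ := tdm_extract F hdisj false haa
    obtain ⟨E2, hE2F, h2⟩ := tdm_extract F hdisj true hbb
    obtain ⟨px1, py1, pz1, pt1⟩ := tdm_rows E1 false h1
    obtain ⟨px2, py2, pz2, pt2⟩ := tdm_rows E2 true h2
    simp only [Bool.false_eq_true, if_false, if_true, ite_false, ite_true] at py1 pz1 py2 pz2
    have hFfin : F.Finite := Set.toFinite F
    set EF : Finset (↥S × Fin 3) :=
      hFfin.toFinset.preimage Sum.inl Sum.inl_injective.injOn with hEF
    have hmemEF : ∀ p : ↥S × Fin 3, p ∈ EF ↔ (Sum.inl p : TDMEdge q S) ∈ F := fun p => by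
      rw [hEF, Finset.mem_preimage, Set.Finite.mem_toFinset]
    have hE1sub : E1 ⊆ EF := fun p hp => (hmemEF p).mpr (hE1F p hp)
    have hE2sub : E2 ⊆ EF := fun p hp => (hmemEF p).mpr (hE2F p hp)
    have hcardEF : EF.card ≤ 3 * q := by
      have hs1 : EF.image (Sum.inl : ↥S × Fin 3 → TDMEdge q S) ⊆ hFfin.toFinset := by
        intro e he
        obtain ⟨p, hp, rfl⟩ := Finset.mem_image.mp he
        exact Finset.mem_preimage.mp hp
      have hs2 : EF.card = (EF.image (Sum.inl : ↥S × Fin 3 → TDMEdge q S)).card :=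
        (Finset.card_image_of_injective _ Sum.inl_injective).symm
      have hs4 := Finset.card_le_card hs1
      have hs5 : F.ncard = hFfin.toFinset.card := Set.ncard_eq_toFinset_card F hFfin
      omega
    -- counting
    have px1pos : ∀ x, 0 < ((tdmW E1 0).filter fun s => s.1.1 = x).card :=
      fun x => by have := px1 x; omega
    have py1pos : ∀ y, 0 < ((tdmW E1 1).filter fun s => s.1.2.1 = y).card :=
      fun y => by have := py1 y; omega
    have px2pos : ∀ x, 0 < ((tdmW E2 0).filter fun s => s.1.1 = x).card :=
      fun x => by have := px2 x; omega
    have pz2pos : ∀ z, 0 < ((tdmW E2 2).filter fun s => s.1.2.2 = z).card :=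
      fun z => by have := pz2 z; omega
    have c10 : q ≤ (tdmW E1 0).card := tdm_le_card' _ (fun s => s.1.1) px1pos
    have c11 : q ≤ (tdmW E1 1).card := tdm_le_card' _ (fun s => s.1.2.1) py1pos
    have c20 : q ≤ (tdmW E2 0).card := tdm_le_card' _ (fun s => s.1.1) px2pos
    have c22 : q ≤ (tdmW E2 2).card := tdm_le_card' _ (fun s => s.1.2.2) pz2pos
    have m10 := Finset.card_le_card (tdm_W_mono hE1sub 0)
    have m11 := Finset.card_le_card (tdm_W_mono hE1sub 1)
    have m20 := Finset.card_le_card (tdm_W_mono hE2sub 0)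
    have m22 := Finset.card_le_card (tdm_W_mono hE2sub 2)
    have hsum3 := tdm_cardE EF
    have ha0 : (tdmW EF 0).card = q := by omega
    have ha1 : (tdmW EF 1).card = q := by omega
    have ha2 : (tdmW EF 2).card = q := by omega
    have hW10 : tdmW E1 0 = tdmW EF 0 :=
      Finset.eq_of_subset_of_card_le (tdm_W_mono hE1sub 0) (by omega)
    have hW11 : tdmW E1 1 = tdmW EF 1 :=
      Finset.eq_of_subset_of_card_le (tdm_W_mono hE1sub 1) (by omega)
    have hW20 : tdmW E2 0 = tdmW EF 0 :=
      Finset.eq_of_subset_of_card_le (tdm_W_mono hE2sub 0) (by omega)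
    have hW22 : tdmW E2 2 = tdmW EF 2 :=
      Finset.eq_of_subset_of_card_le (tdm_W_mono hE2sub 2) (by omega)
    -- fibers of tdmW EF i are singletons
    have pxEF : ∀ x, 0 < ((tdmW EF 0).filter fun s => s.1.1 = x).card :=
      fun x => by rw [← hW10]; exact px1pos x
    have pyEF : ∀ y, 0 < ((tdmW EF 1).filter fun s => s.1.2.1 = y).card :=
      fun y => by rw [← hW11]; exact py1pos y
    have pzEF : ∀ z, 0 < ((tdmW EF 2).filter fun s => s.1.2.2 = z).card :=
      fun z => by rw [← hW22]; exact pz2pos z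
    have hfib0 : ∀ x, ((tdmW EF 0).filter fun s => s.1.1 = x).card = 1 :=
      tdm_fiber_eq_one' _ (fun s => s.1.1) ha0 pxEF
    have hfib1 : ∀ y, ((tdmW EF 1).filter fun s => s.1.2.1 = y).card = 1 :=
      tdm_fiber_eq_one' _ (fun s => s.1.2.1) ha1 pyEF
    have hfib2 : ∀ z, ((tdmW EF 2).filter fun s => s.1.2.2 = z).card = 1 :=
      tdm_fiber_eq_one' _ (fun s => s.1.2.2) ha2 pzEF
    have inj0 : ∀ s ∈ tdmW EF 0, ∀ t ∈ tdmW EF 0, s.1.1 = t.1.1 → s = t :=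
      tdm_inj_of_fiber_one' _ (fun s => s.1.1) (fun x => le_of_eq (hfib0 x))
    have inj1 : ∀ s ∈ tdmW EF 1, ∀ t ∈ tdmW EF 1, s.1.2.1 = t.1.2.1 → s = t :=
      tdm_inj_of_fiber_one' _ (fun s => s.1.2.1) (fun y => le_of_eq (hfib1 y))
    have inj2 : ∀ s ∈ tdmW EF 2, ∀ t ∈ tdmW EF 2, s.1.2.2 = t.1.2.2 → s = t :=
      tdm_inj_of_fiber_one' _ (fun s => s.1.2.2) (fun z => le_of_eq (hfib2 z))
    -- emptiness of W E1 2 and W E2 1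
    have hW12 : tdmW E1 2 = ∅ := by
      rw [Finset.eq_empty_iff_forall_notMem]
      intro s hs
      have hmem : s ∈ (tdmW E1 2).filter fun u => u.1.2.2 = s.1.2.2 :=
        Finset.mem_filter.mpr ⟨hs, rfl⟩
      have hpos : 0 < ((tdmW E1 2).filter fun u => u.1.2.2 = s.1.2.2).card :=
        Finset.card_pos.mpr ⟨s, hmem⟩
      have hsub : (tdmW E1 2).filter (fun u => u.1.2.2 = s.1.2.2) ⊆
          (tdmW EF 2).filter fun u => u.1.2.2 = s.1.2.2 :=
        Finset.filter_subset_filter _ (tdm_W_mono hE1sub 2)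
      have hle := Finset.card_le_card hsub
      have := hfib2 s.1.2.2
      have := pz1 s.1.2.2
      omega
    have hW21 : tdmW E2 1 = ∅ := by
      rw [Finset.eq_empty_iff_forall_notMem]
      intro s hs
      have hmem : s ∈ (tdmW E2 1).filter fun u => u.1.2.1 = s.1.2.1 :=
        Finset.mem_filter.mpr ⟨hs, rfl⟩
      have hpos : 0 < ((tdmW E2 1).filter fun u => u.1.2.1 = s.1.2.1).card :=
        Finset.card_pos.mpr ⟨s, hmem⟩
      have hsub : (tdmW E2 1).filter (fun u => u.1.2.1 = s.1.2.1) ⊆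
          (tdmW EF 1).filter fun u => u.1.2.1 = s.1.2.1 :=
        Finset.filter_subset_filter _ (tdm_W_mono hE2sub 1)
      have hle := Finset.card_le_card hsub
      have := hfib1 s.1.2.1
      have := py2 s.1.2.1
      omega
    -- W EF 0 = W EF 1 and W EF 0 = W EF 2
    have hW01 : tdmW EF 0 = tdmW EF 1 := by
      ext t
      rw [← hW10, ← hW11, tdm_mem_W, tdm_mem_W]
      have hne2 : (t, 2) ∉ E1 := fun hc => by
        have : t ∈ tdmW E1 2 := (tdm_mem_W E1 2 t).mpr hc
        rw [hW12] at this
        exact absurd this (Finset.notMem_empty t)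
      have hpt := pt1 t
      by_cases h0 : (t, 0) ∈ E1 <;> by_cases h1' : (t, 1) ∈ E1 <;>
        simp [h0, h1', hne2] at hpt ⊢
    have hW02 : tdmW EF 0 = tdmW EF 2 := by
      ext t
      rw [← hW20, ← hW22, tdm_mem_W, tdm_mem_W]
      have hne1 : (t, 1) ∉ E2 := fun hc => by
        have : t ∈ tdmW E2 1 := (tdm_mem_W E2 1 t).mpr hc
        rw [hW21] at this
        exact absurd this (Finset.notMem_empty t)
      have hpt := pt2 t
      by_cases h0 : (t, 0) ∈ E2 <;> by_cases h2' : (t, 2) ∈ E2 <;>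
        simp [h0, h2', hne1] at hpt ⊢
    -- final assembly
    refine ⟨(tdmW EF 0).image Subtype.val, ?_, ?_, ?_⟩
    · intro a ha
      obtain ⟨s, _, rfl⟩ := Finset.mem_image.mp ha
      exact s.2
    · rw [Finset.card_image_of_injective _ Subtype.val_injective]
      exact ha0
    · intro a ha b hb hab
      obtain ⟨s, hsW, rfl⟩ := Finset.mem_image.mp ha
      obtain ⟨t, htW, rfl⟩ := Finset.mem_image.mp hb
      have hst : s ≠ t := fun h => hab (congrArg Subtype.val h)
      have hsW1 : s ∈ tdmW EF 1 := hW01 ▸ hsW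
      have htW1 : t ∈ tdmW EF 1 := hW01 ▸ htW
      have hsW2 : s ∈ tdmW EF 2 := hW02 ▸ hsW
      have htW2 : t ∈ tdmW EF 2 := hW02 ▸ htW
      exact ⟨fun h => hst (inj0 s hsW t htW h),
             fun h => hst (inj1 s hsW1 t htW1 h),
             fun h => hst (inj2 s hsW2 t htW2 h)⟩
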